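/- Let N ≥ 2 and m ≥ 3 be integers. For 0 ≤ k ≤ m−1 define E_k = Σ_s (N−1)^{−k} / (|image(s)| + 1), the sum over all functions s : {1,…,k} → {1,…,N−1} (so E₀ = 1/1 = 1); E_k is the expectation of 1/(D+1) where D is the number of distinct values among k i.i.d. uniform samples from {1,…,N−1}. Then for every y with 0 < y < 1/N, one has Σ_{k=0}^{m−1} C(m,k) (1−y)^k y^{m−k} E_k > y, where C(m,k) is the binomial coefficient. -/

import Mathlib

open Finset

namespace VTD

lemma card_filter_lt (n j : ℕ) (hj : j ≤ n) :
    ((univ : Finset (Fin n)).filter (fun x : Fin n => (x : ℕ) < j)).card = j := by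
  classical
  rw [← Fintype.card_subtype]
  have e : {x : Fin n // (x : ℕ) < j} ≃ Fin j :=
    { toFun := fun x => ⟨x.1, x.2⟩
      invFun := fun a => ⟨⟨a.1, lt_of_lt_of_le a.2 hj⟩, a.2⟩
      left_inv := fun x => by ext; rfl
      right_inv := fun a => by ext; rfl }
  rw [Fintype.card_congr e, Fintype.card_fin]

lemma card_funs_lt (n k j : ℕ) (hj : j ≤ n) :
    ((univ : Finset (Fin k → Fin n)).filter
      (fun s : Fin k → Fin n => ∀ i, (s i : ℕ) < j)).card = j ^ k := by
  classical
  rw [← Fintype.card_subtype]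
  have e : {s : Fin k → Fin n // ∀ i, (s i : ℕ) < j} ≃ (Fin k → {x : Fin n // (x : ℕ) < j}) :=
    Equiv.subtypePiEquivPi (p := fun (_ : Fin k) (b : Fin n) => (b : ℕ) < j)
  rw [Fintype.card_congr e, Fintype.card_fun, Fintype.card_subtype, card_filter_lt n j hj,
    Fintype.card_fin]

lemma sup_le_n {n : ℕ} (A : Finset (Fin n)) : A.sup (fun a => (a : ℕ) + 1) ≤ n :=
  Finset.sup_le fun a _ => a.2

lemma sup_le_iff_forall {n k : ℕ} (s : Fin k → Fin n) (j : ℕ) :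
    (univ.image s).sup (fun a => (a : ℕ) + 1) ≤ j ↔ ∀ i, (s i : ℕ) < j := by
  rw [Finset.sup_le_iff]
  constructor
  · intro h i
    have := h (s i) (mem_image_of_mem s (mem_univ i))
    omega
  · intro h a ha
    obtain ⟨i, _, rfl⟩ := mem_image.mp ha
    exact h i

lemma filter_ge_range_card (K t : ℕ) :
    ((range K).filter (fun j : ℕ => t ≤ j)).card = K - t := by
  have : (range K).filter (fun j : ℕ => t ≤ j) = Ico t K := by
    ext x; simp [mem_range, mem_Ico, and_comm]
  rw [this, Nat.card_Ico]

lemma sum_pow_eq (n k : ℕ) :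
    ∑ j ∈ range (n + 1), j ^ k
      = ∑ s : Fin k → Fin n, (n + 1 - (univ.image s).sup (fun a => (a : ℕ) + 1)) := by
  classical
  calc ∑ j ∈ range (n + 1), j ^ k
      = ∑ j ∈ range (n + 1),
        ((univ : Finset (Fin k → Fin n)).filter
          (fun s : Fin k → Fin n =>
            (univ.image s).sup (fun a => (a : ℕ) + 1) ≤ j)).card := by
        refine sum_congr rfl fun j hj => ?_
        rw [← card_funs_lt n k j (by have := mem_range.mp hj; omega)]
        congr 1
        refine filter_congr fun s _ => ?_
        rw [sup_le_iff_forall]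
    _ = ∑ j ∈ range (n + 1), ∑ s : Fin k → Fin n,
          if (univ.image s).sup (fun a => (a : ℕ) + 1) ≤ j then 1 else 0 := by
        refine sum_congr rfl fun j _ => ?_
        rw [Finset.card_filter]
    _ = ∑ s : Fin k → Fin n, ∑ j ∈ range (n + 1),
          if (univ.image s).sup (fun a => (a : ℕ) + 1) ≤ j then 1 else 0 := sum_comm
    _ = ∑ s : Fin k → Fin n,
        ((range (n + 1)).filter
          (fun j : ℕ => (univ.image s).sup (fun a => (a : ℕ) + 1) ≤ j)).card := by
        refine sum_congr rfl fun s _ => ?_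
        rw [Finset.card_filter]
    _ = _ := by
        refine sum_congr rfl fun s _ => ?_
        exact filter_ge_range_card (n + 1) _

lemma sum_card_sub_sup (n d : ℕ) :
    ∑ A ∈ powersetCard d (univ : Finset (Fin n)), (n + 1 - A.sup (fun a => (a : ℕ) + 1))
      = (n + 1).choose (d + 1) := by
  classical
  calc ∑ A ∈ powersetCard d (univ : Finset (Fin n)), (n + 1 - A.sup (fun a => (a : ℕ) + 1))
      = ∑ A ∈ powersetCard d (univ : Finset (Fin n)), ∑ j ∈ range (n + 1),
          if A.sup (fun a => (a : ℕ) + 1) ≤ j then 1 else 0 := by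
        refine sum_congr rfl fun A _ => ?_
        rw [← Finset.card_filter, filter_ge_range_card (n + 1)]
    _ = ∑ j ∈ range (n + 1), ∑ A ∈ powersetCard d (univ : Finset (Fin n)),
          if A.sup (fun a => (a : ℕ) + 1) ≤ j then 1 else 0 := sum_comm
    _ = ∑ j ∈ range (n + 1), j.choose d := by
        refine sum_congr rfl fun j hj => ?_
        have hj' : j ≤ n := by have := mem_range.mp hj; omega
        rw [← Finset.card_filter]
        have hset : (powersetCard d (univ : Finset (Fin n))).filter
              (fun A : Finset (Fin n) => A.sup (fun a => (a : ℕ) + 1) ≤ j)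
            = powersetCard d ((univ : Finset (Fin n)).filter (fun x : Fin n => (x : ℕ) < j)) := by
          ext A
          simp only [mem_filter, mem_powersetCard, Finset.sup_le_iff, subset_iff]
          constructor
          · rintro ⟨⟨_, hcard⟩, hsup⟩
            exact ⟨fun {a} ha => ⟨mem_univ a, hsup a ha⟩, hcard⟩
          · rintro ⟨hsub, hcard⟩
            refine ⟨⟨fun {a} _ => mem_univ a, hcard⟩, fun a ha => ?_⟩
            have := (hsub ha).2
            omega
        rw [hset, Finset.card_powersetCard, card_filter_lt n j hj']
    _ = (n + 1).choose (d + 1) := by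
        rw [← Nat.sum_Icc_choose n d]
        have h1 : range (n + 1) = Icc 0 n := by
          rw [range_eq_Ico, ← Finset.Ico_add_one_right_eq_Icc]
        rw [h1]
        refine (Finset.sum_subset ?_ ?_).symm
        · intro x hx; simp only [mem_Icc] at *; omega
        · intro x hx hnx
          simp only [mem_Icc] at hx hnx
          exact Nat.choose_eq_zero_of_lt (by omega)

lemma fiber_card_eq (n k : ℕ) (A B : Finset (Fin n)) (h : A.card = B.card) :
    ((univ : Finset (Fin k → Fin n)).filter
      (fun s : Fin k → Fin n => univ.image s = A)).card
    = ((univ : Finset (Fin k → Fin n)).filter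
      (fun s : Fin k → Fin n => univ.image s = B)).card := by
  classical
  have hcard : Fintype.card {x : Fin n // x ∈ A} = Fintype.card {x : Fin n // x ∈ B} := by
    simpa using h
  let e : {x : Fin n // x ∈ A} ≃ {x : Fin n // x ∈ B} := Fintype.equivOfCardEq hcard
  let σ : Equiv.Perm (Fin n) := e.extendSubtype
  have hmem : ∀ a ∈ A, σ a ∈ B := fun a ha => e.extendSubtype_mem a ha
  have himg : A.image σ = B := by
    apply Finset.eq_of_subset_of_card_le
    · exact image_subset_iff.mpr hmem
    · rw [Finset.card_image_of_injective _ σ.injective]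
      omega
  have himg' : B.image σ.symm = A := by
    rw [← himg, Finset.image_image]
    simp
  apply Finset.card_bij' (fun s _ => (σ : Fin n → Fin n) ∘ s)
    (fun s _ => (σ.symm : Fin n → Fin n) ∘ s)
  · intro s hs
    simp only [mem_filter, mem_univ, true_and] at hs ⊢
    rw [← Finset.image_image, hs, himg]
  · intro s hs
    simp only [mem_filter, mem_univ, true_and] at hs ⊢
    rw [← Finset.image_image, hs, himg']
  · intro s _
    funext i; simp
  · intro s _
    funext i; simp


lemma choose_cast_eq (n d : ℕ) :
    (((n + 1).choose (d + 1) : ℕ) : ℝ) = (n.choose d : ℝ) * ((n : ℝ) + 1) / ((d : ℝ) + 1) := by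
  have h' : ((n + 1) * n.choose d : ℕ) = ((n + 1).choose (d + 1) * (d + 1) : ℕ) := by
    simpa [Nat.succ_eq_add_one] using Nat.add_one_mul_choose_eq n d
  have hc : ((n : ℝ) + 1) * (n.choose d : ℝ) = ((n + 1).choose (d + 1) : ℝ) * ((d : ℝ) + 1) := by
    exact_mod_cast congrArg (Nat.cast : ℕ → ℝ) h'
  field_simp
  linarith [hc]

lemma sum_powersetCard_eq (n d : ℕ) :
    ∑ A ∈ powersetCard d (univ : Finset (Fin n)),
        (((n : ℝ) + 1) - ((A.sup (fun a => (a : ℕ) + 1) : ℕ) : ℝ))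
      = ∑ A ∈ powersetCard d (univ : Finset (Fin n)),
        (((n : ℝ) + 1) / ((A.card : ℝ) + 1)) := by
  classical
  have lhs_eq : ∑ A ∈ powersetCard d (univ : Finset (Fin n)),
      (((n : ℝ) + 1) - ((A.sup (fun a => (a : ℕ) + 1) : ℕ) : ℝ))
      = (((n + 1).choose (d + 1) : ℕ) : ℝ) := by
    rw [← sum_card_sub_sup n d, Nat.cast_sum]
    refine sum_congr rfl fun A _ => ?_
    have h : A.sup (fun a => (a : ℕ) + 1) ≤ n + 1 := le_trans (sup_le_n A) (by omega)
    rw [Nat.cast_sub h]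
    push_cast
    ring
  have rhs_eq : ∑ A ∈ powersetCard d (univ : Finset (Fin n)),
      (((n : ℝ) + 1) / ((A.card : ℝ) + 1))
      = (n.choose d : ℝ) * ((n : ℝ) + 1) / ((d : ℝ) + 1) := by
    rw [Finset.sum_congr rfl (fun A hA => by
      rw [(mem_powersetCard.mp hA).2]), Finset.sum_const, Finset.card_powersetCard]
    simp [card_univ, mul_div_assoc]
  rw [lhs_eq, rhs_eq, choose_cast_eq]

/-- The key combinatorial identity. -/
lemma image_card_inv_sum (n k : ℕ) :
    ∑ s : Fin k → Fin n, (1 : ℝ) / (((univ.image s).card : ℝ) + 1)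
      = (∑ j ∈ range (n + 1), (j : ℝ) ^ k) / ((n : ℝ) + 1) := by
  classical
  have key : ∑ s : Fin k → Fin n,
      (((n : ℝ) + 1) - (((univ.image s).sup (fun a => (a : ℕ) + 1) : ℕ) : ℝ))
      = ∑ s : Fin k → Fin n, (((n : ℝ) + 1) / (((univ.image s).card : ℝ) + 1)) := by
    have hl := Finset.sum_fiberwise' (univ : Finset (Fin k → Fin n))
      (fun s => univ.image s)
      (fun A : Finset (Fin n) => (((n : ℝ) + 1) - ((A.sup (fun a => (a : ℕ) + 1) : ℕ) : ℝ)))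
    have hr := Finset.sum_fiberwise' (univ : Finset (Fin k → Fin n))
      (fun s => univ.image s)
      (fun A : Finset (Fin n) => (((n : ℝ) + 1) / ((A.card : ℝ) + 1)))
    rw [← hl, ← hr]
    have hform : ∀ w : Finset (Fin n) → ℝ,
        (∑ A : Finset (Fin n), ∑ _s ∈ (univ : Finset (Fin k → Fin n)).filter
          (fun s => univ.image s = A), w A)
        = ∑ d ∈ range (n + 1), ∑ A ∈ powersetCard d (univ : Finset (Fin n)),
            (((univ : Finset (Fin k → Fin n)).filter
              (fun s => univ.image s = A)).card : ℝ) * w A := by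
      intro w
      rw [Finset.sum_congr rfl (fun A (_ : A ∈ (univ : Finset (Finset (Fin n)))) => by
        rw [Finset.sum_const, nsmul_eq_mul])]
      have h2 : (univ : Finset (Finset (Fin n))) = (univ : Finset (Fin n)).powerset := by
        rw [Finset.powerset_univ]
      rw [h2, Finset.sum_powerset]
      simp [card_univ]
    rw [hform, hform]
    refine sum_congr rfl fun d hd => ?_
    have hd' : d ≤ n := by have := mem_range.mp hd; omega
    obtain ⟨A₀, -, hA₀card⟩ := Finset.exists_subset_card_eq
      (show d ≤ (univ : Finset (Fin n)).card by simpa [card_univ] using hd')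
    have hfib : ∀ A ∈ powersetCard d (univ : Finset (Fin n)),
        (((univ : Finset (Fin k → Fin n)).filter (fun s => univ.image s = A)).card : ℝ)
        = (((univ : Finset (Fin k → Fin n)).filter (fun s => univ.image s = A₀)).card : ℝ) := by
      intro A hA
      exact_mod_cast fiber_card_eq n k A A₀
        (by rw [(mem_powersetCard.mp hA).2, hA₀card])
    set c : ℝ := (((univ : Finset (Fin k → Fin n)).filter
      (fun s => univ.image s = A₀)).card : ℝ) with hc
    calc ∑ A ∈ powersetCard d (univ : Finset (Fin n)),
            (((univ : Finset (Fin k → Fin n)).filter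
              (fun s => univ.image s = A)).card : ℝ)
            * (((n : ℝ) + 1) - ((A.sup (fun a => (a : ℕ) + 1) : ℕ) : ℝ))
        = ∑ A ∈ powersetCard d (univ : Finset (Fin n)),
            c * (((n : ℝ) + 1) - ((A.sup (fun a => (a : ℕ) + 1) : ℕ) : ℝ)) :=
          sum_congr rfl fun A hA => by rw [hfib A hA]
      _ = c * ∑ A ∈ powersetCard d (univ : Finset (Fin n)),
            (((n : ℝ) + 1) - ((A.sup (fun a => (a : ℕ) + 1) : ℕ) : ℝ)) := (Finset.mul_sum _ _ _).symm
      _ = c * ∑ A ∈ powersetCard d (univ : Finset (Fin n)),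
            (((n : ℝ) + 1) / ((A.card : ℝ) + 1)) := by rw [sum_powersetCard_eq n d]
      _ = ∑ A ∈ powersetCard d (univ : Finset (Fin n)),
            c * (((n : ℝ) + 1) / ((A.card : ℝ) + 1)) := Finset.mul_sum _ _ _
      _ = ∑ A ∈ powersetCard d (univ : Finset (Fin n)),
            (((univ : Finset (Fin k → Fin n)).filter
              (fun s => univ.image s = A)).card : ℝ)
            * (((n : ℝ) + 1) / ((A.card : ℝ) + 1)) :=
          sum_congr rfl fun A hA => by rw [hfib A hA]
  have hsum : (∑ j ∈ range (n + 1), (j : ℝ) ^ k)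
      = ∑ s : Fin k → Fin n,
        (((n : ℝ) + 1) - (((univ.image s).sup (fun a => (a : ℕ) + 1) : ℕ) : ℝ)) := by
    have h0 : (∑ j ∈ range (n + 1), (j : ℝ) ^ k)
        = ((∑ j ∈ range (n + 1), j ^ k : ℕ) : ℝ) := by push_cast; rfl
    rw [h0, sum_pow_eq n k, Nat.cast_sum]
    refine sum_congr rfl fun s _ => ?_
    have h : (univ.image s).sup (fun a => (a : ℕ) + 1) ≤ n + 1 := le_trans (sup_le_n _) (by omega)
    rw [Nat.cast_sub h]
    push_cast
    ring
  have hne : ((n : ℝ) + 1) ≠ 0 := by positivity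
  rw [hsum, key, eq_div_iff hne, Finset.sum_mul]
  refine sum_congr rfl fun s _ => ?_
  rw [div_mul_eq_mul_div, one_mul]


lemma pair_sign (a b : ℝ) (r : ℕ) (ha : 0 ≤ a) (hb : 0 ≤ b) :
    0 ≤ (a ^ r - b ^ r) * (a ^ 2 - b ^ 2) := by
  rcases le_total b a with h | h
  · exact mul_nonneg (sub_nonneg.mpr (pow_le_pow_left₀ hb h r))
      (sub_nonneg.mpr (pow_le_pow_left₀ hb h 2))
  · have : (a ^ r - b ^ r) * (a ^ 2 - b ^ 2) = (b ^ r - a ^ r) * (b ^ 2 - a ^ 2) := by ring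
    rw [this]
    exact mul_nonneg (sub_nonneg.mpr (pow_le_pow_left₀ ha h r))
      (sub_nonneg.mpr (pow_le_pow_left₀ ha h 2))

lemma core_sum (K : ℕ) (r : ℕ) :
    ∑ j ∈ range K, (j : ℝ) ^ 2 * ((K : ℝ) - (j : ℝ)) ^ r
      ≤ ∑ j ∈ range K, (j : ℝ) ^ (r + 2) := by
  rcases Nat.eq_zero_or_pos K with rfl | hK
  · simp
  obtain ⟨K', rfl⟩ : ∃ K', K = K' + 1 := ⟨K - 1, by omega⟩
  rw [Finset.sum_range_succ', Finset.sum_range_succ']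
  simp only [Nat.cast_zero, Nat.cast_add, Nat.cast_one]
  have h0 : ((0 : ℝ)) ^ 2 * (((K' : ℝ) + 1) - 0) ^ r = 0 := by ring
  have h0' : ((0 : ℝ)) ^ (r + 2) = 0 := by
    rw [zero_pow]; omega
  rw [h0, h0', add_zero, add_zero]
  -- reflect the LHS
  have hrefl : ∑ i ∈ range K', (((i : ℝ) + 1)) ^ 2 * (((K' : ℝ) + 1) - ((i : ℝ) + 1)) ^ r
      = ∑ i ∈ range K', (((K' : ℝ) - (i : ℝ))) ^ 2 * (((i : ℝ) + 1)) ^ r := by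
    rw [← Finset.sum_range_reflect]
    refine sum_congr rfl fun j hj => ?_
    have hj' : j < K' := mem_range.mp hj
    have hcast : ((K' - 1 - j : ℕ) : ℝ) = (K' : ℝ) - 1 - (j : ℝ) := by
      have : K' - 1 - j = K' - (1 + j) := by omega
      rw [this, Nat.cast_sub (by omega)]
      push_cast; ring
    rw [hcast]
    ring_nf
  rw [hrefl]
  rw [← sub_nonneg, ← Finset.sum_sub_distrib]
  have key : 0 ≤ ∑ i ∈ range K',
      ((((i : ℝ) + 1)) ^ (r + 2) - (((K' : ℝ) - (i : ℝ))) ^ 2 * (((i : ℝ) + 1)) ^ r) := by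
    have h2 : (2 : ℝ) * ∑ i ∈ range K',
        ((((i : ℝ) + 1)) ^ (r + 2) - (((K' : ℝ) - (i : ℝ))) ^ 2 * (((i : ℝ) + 1)) ^ r)
        = ∑ i ∈ range K',
          ((((i : ℝ) + 1)) ^ r - (((K' : ℝ) - (i : ℝ))) ^ r)
            * ((((i : ℝ) + 1)) ^ 2 - (((K' : ℝ) - (i : ℝ))) ^ 2) := by
      have hswap : ∑ i ∈ range K',
          ((((i : ℝ) + 1)) ^ (r + 2) - (((K' : ℝ) - (i : ℝ))) ^ 2 * (((i : ℝ) + 1)) ^ r)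
          = ∑ i ∈ range K',
          ((((K' : ℝ) - (i : ℝ))) ^ (r + 2) - (((i : ℝ) + 1)) ^ 2 * (((K' : ℝ) - (i : ℝ))) ^ r) := by
        rw [← Finset.sum_range_reflect]
        refine sum_congr rfl fun j hj => ?_
        have hj' : j < K' := mem_range.mp hj
        have hcast : ((K' - 1 - j : ℕ) : ℝ) = (K' : ℝ) - 1 - (j : ℝ) := by
          have : K' - 1 - j = K' - (1 + j) := by omega
          rw [this, Nat.cast_sub (by omega)]
          push_cast; ring
        rw [hcast]
        ring_nf
      rw [two_mul]
      nth_rewrite 2 [hswap]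
      rw [← Finset.sum_add_distrib]
      refine sum_congr rfl fun j hj => ?_
      rw [pow_add, pow_add]
      ring
    have hterm : 0 ≤ ∑ i ∈ range K',
        ((((i : ℝ) + 1)) ^ r - (((K' : ℝ) - (i : ℝ))) ^ r)
          * ((((i : ℝ) + 1)) ^ 2 - (((K' : ℝ) - (i : ℝ))) ^ 2) := by
      refine Finset.sum_nonneg fun j hj => ?_
      have hj' : j < K' := mem_range.mp hj
      exact pair_sign _ _ r (by positivity) (by
        have : (j : ℝ) ≤ (K' : ℝ) := by exact_mod_cast le_of_lt hj'
        linarith)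
    linarith
  linarith [key]

lemma deriv2_neg_aux (n m : ℕ) (hn : 1 ≤ n) (hm : 3 ≤ m) (y : ℝ) (hy0 : 0 < y)
    (hy1 : y < 1 / ((n : ℝ) + 1)) :
    ∑ j ∈ range (n + 1), (1 - (j : ℝ) / n) ^ 2
        * ((j : ℝ) / n + y * (1 - (j : ℝ) / n)) ^ (m - 2)
      < ∑ j ∈ range (n + 1), ((j : ℝ) / n) ^ 2 * ((j : ℝ) / n * (1 - y)) ^ (m - 2) := by
  have hn0 : (n : ℝ) ≠ 0 := by positivity
  have hn1 : (1 : ℝ) ≤ (n : ℝ) := by exact_mod_cast hn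
  have hK0 : ((n : ℝ) + 1) ≠ 0 := by positivity
  set r : ℕ := m - 2 with hr
  have hr1 : 1 ≤ r := by omega
  have hy2 : y < 1 := by
    have : 1 / ((n : ℝ) + 1) ≤ 1 := by
      rw [div_le_one (by positivity)]; linarith
    linarith
  have hc0 : (n : ℝ) / ((n : ℝ) + 1) ≤ 1 - y := by
    rw [div_le_iff₀ (by positivity)]
    have : y * ((n : ℝ) + 1) < 1 := by
      rw [← lt_div_iff₀ (by positivity)]; exact hy1
    nlinarith
  have hxmem : ∀ j ∈ range (n + 1), 0 ≤ (j : ℝ) / n ∧ (j : ℝ) / n ≤ 1 := by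
    intro j hj
    have hj' : (j : ℝ) ≤ (n : ℝ) := by exact_mod_cast Nat.lt_succ_iff.mp (mem_range.mp hj)
    constructor
    · positivity
    · rw [div_le_one (by positivity)]; exact hj'
  -- Step (a): reflect the LHS
  have step_a : ∑ j ∈ range (n + 1), (1 - (j : ℝ) / n) ^ 2
        * ((j : ℝ) / n + y * (1 - (j : ℝ) / n)) ^ r
      = ∑ j ∈ range (n + 1), ((j : ℝ) / n) ^ 2 * (1 - (1 - y) * ((j : ℝ) / n)) ^ r := by
    rw [← Finset.sum_range_reflect]
    refine sum_congr rfl fun j hj => ?_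
    have hj' : j ≤ n := Nat.lt_succ_iff.mp (mem_range.mp hj)
    have hcast : ((n + 1 - 1 - j : ℕ) : ℝ) = (n : ℝ) - (j : ℝ) := by
      have h1 : n + 1 - 1 - j = n - j := by omega
      rw [h1, Nat.cast_sub hj']
    rw [hcast]
    have e2 : ((n : ℝ) - (j : ℝ)) / (n : ℝ) + y * (1 - ((n : ℝ) - (j : ℝ)) / (n : ℝ))
        = 1 - (1 - y) * ((j : ℝ) / n) := by
      field_simp; ring
    have e1 : 1 - ((n : ℝ) - (j : ℝ)) / (n : ℝ) = (j : ℝ) / n := by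
      field_simp
      ring
    rw [e2, e1]
  -- Step (b): strict comparison with c₀ = n/(n+1)
  have step_b : ∑ j ∈ range (n + 1), ((j : ℝ) / n) ^ 2 * (1 - (1 - y) * ((j : ℝ) / n)) ^ r
      < ∑ j ∈ range (n + 1), ((j : ℝ) / n) ^ 2
        * (1 - ((n : ℝ) / ((n : ℝ) + 1)) * ((j : ℝ) / n)) ^ r := by
    apply Finset.sum_lt_sum
    · intro j hj
      obtain ⟨hx0, hx1⟩ := hxmem j hj
      apply mul_le_mul_of_nonneg_left _ (by positivity)
      apply pow_le_pow_left₀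
      · nlinarith
      · nlinarith
    · refine ⟨n, self_mem_range_succ n, ?_⟩
      have hxn : (n : ℝ) / n = 1 := div_self hn0
      rw [hxn]
      simp only [one_pow, mul_one, one_mul]
      apply pow_lt_pow_left₀
      · have : 1 - ((n : ℝ) / ((n : ℝ) + 1)) = 1 / ((n : ℝ) + 1) := by field_simp; ring
        rw [this]
        linarith
      · linarith
      · omega
  -- Step (c): the core reflection inequality
  have step_c : ∑ j ∈ range (n + 1), ((j : ℝ) / n) ^ 2
        * (1 - ((n : ℝ) / ((n : ℝ) + 1)) * ((j : ℝ) / n)) ^ r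
      ≤ ∑ j ∈ range (n + 1), ((j : ℝ) / n) ^ 2
        * (((n : ℝ) / ((n : ℝ) + 1)) * ((j : ℝ) / n)) ^ r := by
    have e3 : ∀ j ∈ range (n + 1), ((j : ℝ) / n) ^ 2
        * (1 - ((n : ℝ) / ((n : ℝ) + 1)) * ((j : ℝ) / n)) ^ r
        = ((j : ℝ) ^ 2 * (((n : ℝ) + 1) - (j : ℝ)) ^ r)
          * ((1 / (n : ℝ)) ^ 2 * (1 / ((n : ℝ) + 1)) ^ r) := by
      intro j hj
      have : 1 - ((n : ℝ) / ((n : ℝ) + 1)) * ((j : ℝ) / n)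
          = (((n : ℝ) + 1) - (j : ℝ)) / ((n : ℝ) + 1) := by
        field_simp
      rw [this]
      rw [div_pow, div_pow, one_div_pow, one_div_pow]
      ring
    have e4 : ∀ j ∈ range (n + 1), ((j : ℝ) / n) ^ 2
        * (((n : ℝ) / ((n : ℝ) + 1)) * ((j : ℝ) / n)) ^ r
        = ((j : ℝ) ^ (r + 2))
          * ((1 / (n : ℝ)) ^ 2 * (1 / ((n : ℝ) + 1)) ^ r) := by
      intro j hj
      have : ((n : ℝ) / ((n : ℝ) + 1)) * ((j : ℝ) / n) = (j : ℝ) / ((n : ℝ) + 1) := by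
        field_simp
      rw [this]
      rw [div_pow, div_pow, one_div_pow, one_div_pow]
      ring
    rw [Finset.sum_congr rfl e3, Finset.sum_congr rfl e4, ← Finset.sum_mul, ← Finset.sum_mul]
    apply mul_le_mul_of_nonneg_right _ (by positivity)
    have := core_sum (n + 1) r
    simpa using this
  -- Step (d): back from c₀ to c = 1 - y
  have step_d : ∑ j ∈ range (n + 1), ((j : ℝ) / n) ^ 2
        * (((n : ℝ) / ((n : ℝ) + 1)) * ((j : ℝ) / n)) ^ r
      ≤ ∑ j ∈ range (n + 1), ((j : ℝ) / n) ^ 2 * ((j : ℝ) / n * (1 - y)) ^ r := by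
    refine Finset.sum_le_sum fun j hj => ?_
    obtain ⟨hx0, hx1⟩ := hxmem j hj
    apply mul_le_mul_of_nonneg_left _ (by positivity)
    apply pow_le_pow_left₀
    · positivity
    · rw [mul_comm ((j:ℝ)/n) (1 - y)]
      apply mul_le_mul_of_nonneg_right hc0 hx0
  calc ∑ j ∈ range (n + 1), (1 - (j : ℝ) / n) ^ 2
        * ((j : ℝ) / n + y * (1 - (j : ℝ) / n)) ^ r
      = ∑ j ∈ range (n + 1), ((j : ℝ) / n) ^ 2 * (1 - (1 - y) * ((j : ℝ) / n)) ^ r := step_a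
    _ < _ := lt_of_lt_of_le step_b (le_trans step_c step_d)


noncomputable def Phi (n m : ℕ) : ℝ → ℝ := fun y =>
  ∑ j ∈ range (n + 1),
    (((j : ℝ) / n + (1 - (j : ℝ) / n) * y) ^ m - ((j : ℝ) / n - (j : ℝ) / n * y) ^ m)

lemma hasDerivAt_affine_pow (p q : ℝ) (m : ℕ) (y : ℝ) :
    HasDerivAt (fun y : ℝ => (p + q * y) ^ m) ((m : ℝ) * (p + q * y) ^ (m - 1) * q) y := by
  have h : HasDerivAt (fun y : ℝ => p + q * y) q y := by
    simpa using ((hasDerivAt_id y).const_mul q).const_add p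
  simpa using h.fun_pow m

lemma hasDerivAt_affine_pow' (p : ℝ) (m : ℕ) (y : ℝ) :
    HasDerivAt (fun y : ℝ => (p - p * y) ^ m) ((m : ℝ) * (p - p * y) ^ (m - 1) * (-p)) y := by
  have h : HasDerivAt (fun y : ℝ => p - p * y) (-p) y := by
    simpa using ((hasDerivAt_id y).const_mul p).const_sub p
  simpa using h.fun_pow m

noncomputable def Phi' (n m : ℕ) : ℝ → ℝ := fun y =>
  ∑ j ∈ range (n + 1),
    ((m : ℝ) * ((j : ℝ) / n + (1 - (j : ℝ) / n) * y) ^ (m - 1) * (1 - (j : ℝ) / n)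
      - (m : ℝ) * ((j : ℝ) / n - (j : ℝ) / n * y) ^ (m - 1) * (-((j : ℝ) / n)))

noncomputable def Phi'' (n m : ℕ) : ℝ → ℝ := fun y =>
  ∑ j ∈ range (n + 1),
    ((m : ℝ) * (((m - 1 : ℕ) : ℝ) * ((j : ℝ) / n + (1 - (j : ℝ) / n) * y) ^ (m - 1 - 1)
        * (1 - (j : ℝ) / n)) * (1 - (j : ℝ) / n)
      - (m : ℝ) * (((m - 1 : ℕ) : ℝ) * ((j : ℝ) / n - (j : ℝ) / n * y) ^ (m - 1 - 1)
        * (-((j : ℝ) / n))) * (-((j : ℝ) / n)))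

lemma hasDerivAt_Phi (n m : ℕ) (y : ℝ) : HasDerivAt (Phi n m) (Phi' n m y) y := by
  apply HasDerivAt.fun_sum
  intro j _
  exact (hasDerivAt_affine_pow _ _ m y).sub (hasDerivAt_affine_pow' _ m y)

lemma hasDerivAt_Phi' (n m : ℕ) (y : ℝ) : HasDerivAt (Phi' n m) (Phi'' n m y) y := by
  apply HasDerivAt.fun_sum
  intro j _
  exact (((hasDerivAt_affine_pow _ _ (m - 1) y).const_mul (m : ℝ)).mul_const _).sub
    (((hasDerivAt_affine_pow' _ (m - 1) y).const_mul (m : ℝ)).mul_const _)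

lemma Phi''_neg (n m : ℕ) (hn : 1 ≤ n) (hm : 3 ≤ m) (y : ℝ) (hy0 : 0 < y)
    (hy1 : y < 1 / ((n : ℝ) + 1)) : Phi'' n m y < 0 := by
  have hsplit : Phi'' n m y = (m : ℝ) * ((m : ℝ) - 1) *
      ((∑ j ∈ range (n + 1), (1 - (j : ℝ) / n) ^ 2
          * ((j : ℝ) / n + y * (1 - (j : ℝ) / n)) ^ (m - 2))
        - (∑ j ∈ range (n + 1), ((j : ℝ) / n) ^ 2 * ((j : ℝ) / n * (1 - y)) ^ (m - 2))) := by
    unfold Phi''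
    rw [← Finset.sum_sub_distrib, Finset.mul_sum]
    refine sum_congr rfl fun j _ => ?_
    have hcast : ((m - 1 : ℕ) : ℝ) = (m : ℝ) - 1 := by
      rw [Nat.cast_sub (by omega)]; simp
    have hexp : m - 1 - 1 = m - 2 := by omega
    have hbase1 : (j : ℝ) / n + (1 - (j : ℝ) / n) * y = (j : ℝ) / n + y * (1 - (j : ℝ) / n) := by
      ring
    have hbase2 : (j : ℝ) / n - (j : ℝ) / n * y = (j : ℝ) / n * (1 - y) := by ring
    rw [hcast, hexp, hbase1, hbase2]
    ring
  rw [hsplit]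
  have hdiff := deriv2_neg_aux n m hn hm y hy0 hy1
  have hm1 : (0 : ℝ) < (m : ℝ) * ((m : ℝ) - 1) := by
    have : (3 : ℝ) ≤ (m : ℝ) := by exact_mod_cast hm
    nlinarith
  have : (∑ j ∈ range (n + 1), (1 - (j : ℝ) / n) ^ 2
          * ((j : ℝ) / n + y * (1 - (j : ℝ) / n)) ^ (m - 2))
        - (∑ j ∈ range (n + 1), ((j : ℝ) / n) ^ 2 * ((j : ℝ) / n * (1 - y)) ^ (m - 2)) < 0 :=
    sub_neg.mpr hdiff
  exact mul_neg_of_pos_of_neg hm1 this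

lemma Phi_zero (n m : ℕ) : Phi n m 0 = 0 := by
  unfold Phi
  simp

lemma Phi_one (n m : ℕ) (hn : 1 ≤ n) (hm : 1 ≤ m) : Phi n m (1 / ((n : ℝ) + 1)) = 1 := by
  have hn0 : (n : ℝ) ≠ 0 := by
    have : (1 : ℝ) ≤ (n : ℝ) := by exact_mod_cast hn
    linarith
  have hK0 : ((n : ℝ) + 1) ≠ 0 := by positivity
  unfold Phi
  have hterm : ∀ j ∈ range (n + 1),
      ((j : ℝ) / n + (1 - (j : ℝ) / n) * (1 / ((n : ℝ) + 1))) ^ m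
        - ((j : ℝ) / n - (j : ℝ) / n * (1 / ((n : ℝ) + 1))) ^ m
      = ((((j + 1 : ℕ) : ℝ)) / ((n : ℝ) + 1)) ^ m - (((j : ℕ) : ℝ) / ((n : ℝ) + 1)) ^ m := by
    intro j _
    have b1 : (j : ℝ) / n + (1 - (j : ℝ) / n) * (1 / ((n : ℝ) + 1))
        = (((j + 1 : ℕ) : ℝ)) / ((n : ℝ) + 1) := by
      push_cast
      field_simp
      ring
    have b2 : (j : ℝ) / n - (j : ℝ) / n * (1 / ((n : ℝ) + 1)) = ((j : ℕ) : ℝ) / ((n : ℝ) + 1) := by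
      field_simp
      ring
    rw [b1, b2]
  rw [Finset.sum_congr rfl hterm]
  have := Finset.sum_range_sub (f := fun j : ℕ => (((j : ℕ) : ℝ) / ((n : ℝ) + 1)) ^ m) (n + 1)
  rw [this]
  have h1 : (((n + 1 : ℕ) : ℝ) / ((n : ℝ) + 1)) = 1 := by
    push_cast
    field_simp
  rw [h1, one_pow]
  have h2 : (((0 : ℕ) : ℝ) / ((n : ℝ) + 1)) ^ m = 0 := by
    simp [zero_pow (by omega : m ≠ 0)]
  rw [h2, sub_zero]

lemma Phi_chord (n m : ℕ) (hn : 1 ≤ n) (hm : 3 ≤ m) (y : ℝ) (hy0 : 0 < y)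
    (hy1 : y < 1 / ((n : ℝ) + 1)) : ((n : ℝ) + 1) * y < Phi n m y := by
  have hK : (0 : ℝ) < (n : ℝ) + 1 := by positivity
  set t : ℝ := 1 / ((n : ℝ) + 1) with ht
  have ht0 : 0 < t := by positivity
  have hconc : StrictConcaveOn ℝ (Set.Icc 0 t) (Phi n m) := by
    apply strictConcaveOn_of_deriv2_neg (convex_Icc _ _)
    · apply Continuous.continuousOn
      unfold Phi
      apply continuous_finset_sum
      intro j _
      fun_prop
    · intro x hx
      rw [interior_Icc, Set.mem_Ioo] at hx
      have hd1 : deriv (Phi n m) = Phi' n m :=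
        funext fun z => (hasDerivAt_Phi n m z).deriv
      have hiter : deriv^[2] (Phi n m) x = deriv (deriv (Phi n m)) x := by
        simp [Function.iterate_succ, Function.iterate_zero, Function.comp]
      rw [hiter, hd1, (hasDerivAt_Phi' n m x).deriv]
      exact Phi''_neg n m hn hm x hx.1 hx.2
  have hmem0 : (0 : ℝ) ∈ Set.Icc 0 t := Set.mem_Icc.mpr ⟨le_refl _, le_of_lt ht0⟩
  have hmemt : t ∈ Set.Icc 0 t := Set.mem_Icc.mpr ⟨le_of_lt ht0, le_refl _⟩
  have hne : (0 : ℝ) ≠ t := ne_of_lt ht0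
  set b : ℝ := ((n : ℝ) + 1) * y with hb
  have hbpos : 0 < b := by positivity
  have hapos : 0 < 1 - b := by
    have : y * ((n : ℝ) + 1) < 1 := by
      rw [← lt_div_iff₀ hK]
      simpa [ht, one_div] using hy1
    simp only [hb]
    nlinarith
  have hab : (1 - b) + b = 1 := by ring
  have hkey := hconc.2 hmem0 hmemt hne hapos hbpos hab
  have harg : (1 - b) • (0 : ℝ) + b • t = y := by
    simp only [smul_eq_mul, mul_zero, zero_add, hb, ht]
    field_simp
  rw [harg, Phi_zero, Phi_one n m hn (by omega)] at hkey
  simpa [hb] using hkey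


end VTD

open Finset

/-- For integers `N ≥ 2`, `m ≥ 3` and `0 < y < 1/N`, one has
`Σ_{k=0}^{m-1} C(m,k) (1-y)^k y^{m-k} E_k > y`, where
`E_k = (N-1)^{-k} Σ_{s : [k] → [N-1]} 1/(|image s| + 1)` is the expectation of `1/(D+1)`
with `D` the number of distinct values among `k` i.i.d. uniform samples from `{1,…,N-1}`. -/
theorem visible_type_drift_positive (N m : ℕ) (hN : 2 ≤ N) (hm : 3 ≤ m)
    (y : ℝ) (hy0 : 0 < y) (hyN : y < 1 / N) :
    y < ∑ k ∈ Finset.range m, (m.choose k : ℝ) * (1 - y) ^ k * y ^ (m - k) *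
      ((1 / ((N : ℝ) - 1) ^ k) *
        ∑ s : Fin k → Fin (N - 1), 1 / ((Finset.univ.image s).card + 1 : ℝ)) := by
  obtain ⟨n, rfl⟩ : ∃ n, N = n + 1 := ⟨N - 1, by omega⟩
  have hn : 1 ≤ n := by omega
  show y < ∑ k ∈ Finset.range m, (m.choose k : ℝ) * (1 - y) ^ k * y ^ (m - k) *
      ((1 / (((n + 1 : ℕ) : ℝ) - 1) ^ k) *
        ∑ s : Fin k → Fin n, 1 / ((Finset.univ.image s).card + 1 : ℝ))
  have hn0 : (n : ℝ) ≠ 0 := by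
    have : (1 : ℝ) ≤ (n : ℝ) := by exact_mod_cast hn
    linarith
  have hK : (0 : ℝ) < (n : ℝ) + 1 := by positivity
  have hcastN : ((n + 1 : ℕ) : ℝ) = (n : ℝ) + 1 := by push_cast; ring
  have hy1 : y < 1 / ((n : ℝ) + 1) := by rwa [hcastN] at hyN
  have hbase : ((n + 1 : ℕ) : ℝ) - 1 = (n : ℝ) := by rw [hcastN]; ring
  rw [hbase]
  have key : ∑ k ∈ Finset.range m, (m.choose k : ℝ) * (1 - y) ^ k * y ^ (m - k) *
      ((1 / (n : ℝ) ^ k) *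
        ∑ s : Fin k → Fin n, 1 / ((Finset.univ.image s).card + 1 : ℝ))
      = VTD.Phi n m y / ((n : ℝ) + 1) := by
    calc ∑ k ∈ Finset.range m, (m.choose k : ℝ) * (1 - y) ^ k * y ^ (m - k) *
        ((1 / (n : ℝ) ^ k) *
          ∑ s : Fin k → Fin n, 1 / ((Finset.univ.image s).card + 1 : ℝ))
        = ∑ k ∈ Finset.range m, (m.choose k : ℝ) * (1 - y) ^ k * y ^ (m - k) *
          ((1 / (n : ℝ) ^ k) * ((∑ j ∈ range (n + 1), (j : ℝ) ^ k) / ((n : ℝ) + 1))) := by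
          refine sum_congr rfl fun k _ => ?_
          rw [VTD.image_card_inv_sum n k]
      _ = ∑ k ∈ Finset.range m, ∑ j ∈ range (n + 1),
            ((j : ℝ) / n * (1 - y)) ^ k * y ^ (m - k) * (m.choose k : ℝ) / ((n : ℝ) + 1) := by
          refine sum_congr rfl fun k _ => ?_
          rw [Finset.sum_div,
            Finset.mul_sum (range (n + 1)) (fun j => (j : ℝ) ^ k / ((n : ℝ) + 1))
              (1 / (n : ℝ) ^ k),
            Finset.mul_sum (range (n + 1))
              (fun j => 1 / (n : ℝ) ^ k * ((j : ℝ) ^ k / ((n : ℝ) + 1)))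
              ((m.choose k : ℝ) * (1 - y) ^ k * y ^ (m - k))]
          refine sum_congr rfl fun j _ => ?_
          rw [mul_pow, div_pow]
          ring
      _ = ∑ j ∈ range (n + 1), ∑ k ∈ Finset.range m,
            ((j : ℝ) / n * (1 - y)) ^ k * y ^ (m - k) * (m.choose k : ℝ) / ((n : ℝ) + 1) :=
          Finset.sum_comm
      _ = ∑ j ∈ range (n + 1),
            (((j : ℝ) / n + (1 - (j : ℝ) / n) * y) ^ m
              - ((j : ℝ) / n - (j : ℝ) / n * y) ^ m) / ((n : ℝ) + 1) := by
          refine sum_congr rfl fun j _ => ?_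
          rw [← Finset.sum_div]
          congr 1
          have hax := add_pow ((j : ℝ) / n * (1 - y)) y m
          rw [Finset.sum_range_succ] at hax
          have hS : ∑ k ∈ Finset.range m, ((j : ℝ) / n * (1 - y)) ^ k * y ^ (m - k)
                * (m.choose k : ℝ)
              = ((j : ℝ) / n * (1 - y) + y) ^ m - ((j : ℝ) / n * (1 - y)) ^ m := by
            rw [hax]
            simp [Nat.choose_self]
          rw [hS]
          have b1 : (j : ℝ) / n * (1 - y) + y = (j : ℝ) / n + (1 - (j : ℝ) / n) * y := by ring
          have b2 : ((j : ℝ) / n * (1 - y)) ^ m = ((j : ℝ) / n - (j : ℝ) / n * y) ^ m := by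
            ring_nf
          rw [b1, b2]
      _ = VTD.Phi n m y / ((n : ℝ) + 1) := by
          rw [← Finset.sum_div]
          rfl
  rw [key, lt_div_iff₀ hK]
  have := VTD.Phi_chord n m hn hm y hy0 hy1
  linarith
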